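/- Suppose multiplication in F_4 over F_2 admits a bilinear multiplication algorithm with r₂ bilinear multiplications and multiplication in F_{16} over F_2 admits a bilinear multiplication algorithm with r₄ bilinear multiplications. Then multiplication in F_{2^5} = F_{32} over F_2 admits a bilinear multiplication algorithm with 3 + 2·r₂ + r₄ bilinear multiplications: there exist F_2-linear forms x_i^*, y_i^* on F_{32} and elements c_i ∈ F_{32}, for 1 ≤ i ≤ 3 + 2r₂ + r₄, such that x·y = Σ_i x_i^*(x) y_i^*(y) c_i for all x, y ∈ F_{32}. In particular, μ_2(5) ≤ 3·μ_2(1) + 2·μ_2(2) + μ_2(4). -/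

import Mathlib

open Polynomial Module

/-- `A` (a `K`-algebra) admits a bilinear multiplication algorithm of bilinear
complexity `r`. -/
def HasBilinearMulAlg (K A : Type*) [Field K] [CommRing A] [Algebra K A] (r : ℕ) : Prop :=
  ∃ (xs ys : Fin r → (A →ₗ[K] K)) (c : Fin r → A),
    ∀ a b : A, a * b = ∑ i, (xs i a * ys i b) • c i

/-- Version of `HasBilinearMulAlg` with an arbitrary finite index type. -/
def AuxAlg (K A : Type*) [Field K] [CommRing A] [Algebra K A]
    (ι : Type*) [Fintype ι] : Prop :=
  ∃ (xs ys : ι → (A →ₗ[K] K)) (c : ι → A),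
    ∀ a b : A, a * b = ∑ i, (xs i a * ys i b) • c i

section AuxLemmas

variable {K : Type*} [Field K]

lemma AuxAlg.reindex {A ι κ : Type*} [CommRing A] [Algebra K A] [Fintype ι] [Fintype κ]
    (e : ι ≃ κ) (h : AuxAlg K A ι) : AuxAlg K A κ := by
  obtain ⟨xs, ys, c, h⟩ := h
  refine ⟨fun i => xs (e.symm i), fun i => ys (e.symm i), fun i => c (e.symm i),
    fun a b => ?_⟩
  rw [h a b]
  exact (Equiv.sum_comp e.symm fun i => (xs i a * ys i b) • c i).symm

lemma AuxAlg.pad {A ι : Type*} [CommRing A] [Algebra K A] [Fintype ι]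
    (κ : Type*) [Fintype κ] (h : AuxAlg K A ι) : AuxAlg K A (ι ⊕ κ) := by
  obtain ⟨xs, ys, c, h⟩ := h
  refine ⟨Sum.elim xs 0, Sum.elim ys 0, Sum.elim c 0, fun a b => ?_⟩
  rw [Fintype.sum_sum_type]
  simp [h a b]

lemma AuxAlg.prod {A B ι κ : Type*} [CommRing A] [Algebra K A] [CommRing B] [Algebra K B]
    [Fintype ι] [Fintype κ] (hA : AuxAlg K A ι) (hB : AuxAlg K B κ) :
    AuxAlg K (A × B) (ι ⊕ κ) := by
  obtain ⟨xs, ys, c, h⟩ := hA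
  obtain ⟨xs', ys', c', h'⟩ := hB
  refine ⟨Sum.elim (fun i => (xs i).comp (LinearMap.fst K A B))
      (fun j => (xs' j).comp (LinearMap.snd K A B)),
    Sum.elim (fun i => (ys i).comp (LinearMap.fst K A B))
      (fun j => (ys' j).comp (LinearMap.snd K A B)),
    Sum.elim (fun i => ((c i, 0) : A × B)) (fun j => ((0, c' j) : A × B)),
    fun a b => ?_⟩
  rw [Fintype.sum_sum_type]
  refine Prod.ext ?_ ?_ <;>
    simp [Prod.fst_sum, Prod.snd_sum, h a.1 b.1, h' a.2 b.2]

lemma AuxAlg.base : AuxAlg K K (Fin 1) :=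
  ⟨fun _ => LinearMap.id, fun _ => LinearMap.id, fun _ => 1, fun a b => by
    simp [smul_eq_mul]⟩

lemma AuxAlg.transfer {A B ι : Type*} [CommRing A] [Algebra K A] [CommRing B] [Algebra K B]
    [Fintype ι] (σ : A →ₗ[K] B) (π : B →ₗ[K] A) (hπσ : ∀ x y : A, π (σ x * σ y) = x * y)
    (h : AuxAlg K B ι) : AuxAlg K A ι := by
  obtain ⟨xs, ys, c, h⟩ := h
  refine ⟨fun i => (xs i).comp σ, fun i => (ys i).comp σ, fun i => π (c i), fun a b => ?_⟩
  rw [← hπσ a b, h (σ a) (σ b), map_sum]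
  simp

end AuxLemmas

section Gen

variable (K : Type*) [Field K]

/-- In a finite extension of a finite field, there is an element whose minimal
polynomial has degree equal to the degree of the extension. -/
lemma exists_gen (E : Type*) [Field E] [Algebra K E] [FiniteDimensional K E] [Finite E] :
    ∃ α : E, IsIntegral K α ∧ (minpoly K α).natDegree = Module.finrank K E := by
  obtain ⟨α, hα⟩ := Field.exists_primitive_element_of_finite_top K E
  have hint := IsIntegral.of_finite K α
  refine ⟨α, hint, ?_⟩
  rw [← IntermediateField.adjoin.finrank hint, hα, IntermediateField.finrank_top']

end Gen

section Lift

variable {K L : Type*} [Field K] [Field L] [Algebra K L]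

/-- Writing an element of `L` as a polynomial in the generator of a power basis. -/
noncomputable def liftMap (pb : PowerBasis K L) : L →ₗ[K] K[X] where
  toFun x := ∑ i : Fin pb.dim, C (pb.basis.repr x i) * X ^ (i : ℕ)
  map_add' x y := by
    simp [map_add, add_mul, Finset.sum_add_distrib]
  map_smul' k x := by
    rw [RingHom.id_apply, Finset.smul_sum]
    apply Finset.sum_congr rfl
    intro i _
    rw [map_smul, Finsupp.smul_apply, smul_eq_mul, map_mul, smul_eq_C_mul, mul_assoc]

lemma liftMap_mem (pb : PowerBasis K L) {n : ℕ} (h : pb.dim = n) (x : L) :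
    liftMap pb x ∈ degreeLT K n := by
  simp only [liftMap, LinearMap.coe_mk, AddHom.coe_mk]
  apply Submodule.sum_mem
  intro i _
  rw [mem_degreeLT]
  exact lt_of_le_of_lt (degree_C_mul_X_pow_le _ _) (Nat.cast_lt.mpr (h ▸ i.isLt))

lemma liftMap_aeval (pb : PowerBasis K L) (x : L) : aeval pb.gen (liftMap pb x) = x := by
  conv_rhs => rw [← pb.basis.sum_repr x]
  simp [liftMap, PowerBasis.coe_basis, Algebra.smul_def]

end Lift

section Key

variable {K : Type*} [Field K]

lemma coeff_mul_eight {P Q : K[X]} (hP : P ∈ degreeLT K 5) (hQ : Q ∈ degreeLT K 5) :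
    (P * Q).coeff 8 = P.coeff 4 * Q.coeff 4 := by
  rw [mem_degreeLT] at hP hQ
  rw [coeff_mul, Finset.sum_eq_single ((4, 4) : ℕ × ℕ)]
  · rintro ⟨i, j⟩ hmem hne
    rw [Finset.HasAntidiagonal.mem_antidiagonal] at hmem
    rcases le_or_gt 5 i with hi | hi
    · rw [coeff_eq_zero_of_degree_lt (lt_of_lt_of_le hP (Nat.cast_le.mpr hi)), zero_mul]
    · have hj : 5 ≤ j := by
        rcases Nat.lt_or_ge j 5 with hj | hj
        · exfalso
          have hi4 : i = 4 := by omega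
          have hj4 : j = 4 := by omega
          exact hne (by simp [hi4, hj4])
        · exact hj
      rw [coeff_eq_zero_of_degree_lt (lt_of_lt_of_le hQ (Nat.cast_le.mpr hj)), mul_zero]
  · intro h
    simp at h

lemma mul_mem_degreeLT9 {P Q : K[X]} (hP : P ∈ degreeLT K 5) (hQ : Q ∈ degreeLT K 5) :
    P * Q ∈ degreeLT K 9 := by
  rcases eq_or_ne P 0 with rfl | hP0
  · simp [Submodule.zero_mem]
  rcases eq_or_ne Q 0 with rfl | hQ0
  · simp [Submodule.zero_mem]
  rw [mem_degreeLT] at hP hQ ⊢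
  have h1 : P.natDegree < 5 := (natDegree_lt_iff_degree_lt hP0).mpr hP
  have h2 : Q.natDegree < 5 := (natDegree_lt_iff_degree_lt hQ0).mpr hQ
  have h3 : (P * Q).natDegree < 9 := by
    have := natDegree_mul_le (p := P) (q := Q)
    omega
  exact (natDegree_lt_iff_degree_lt (mul_ne_zero hP0 hQ0)).mp h3

/-- The key construction: split-multiplication into `K × K × K × M₂ × M₄` via evaluation at
the places `0`, `1`, `∞` and two higher-degree places of the projective line. -/
lemma exists_transfer
    (K : Type*) [Field K] [Fintype K]
    (M₂ : Type*) [Field M₂] [Algebra K M₂] (hM₂ : Module.finrank K M₂ = 2)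
    (M₄ : Type*) [Field M₄] [Algebra K M₄] (hM₄ : Module.finrank K M₄ = 4)
    (L : Type*) [Field L] [Algebra K L] (hL : Module.finrank K L = 5) :
    ∃ (σ : L →ₗ[K] K × K × K × M₂ × M₄) (π : (K × K × K × M₂ × M₄) →ₗ[K] L),
      ∀ x y : L, π (σ x * σ y) = x * y := by
  haveI : FiniteDimensional K M₂ := FiniteDimensional.of_finrank_pos (by omega)
  haveI : FiniteDimensional K M₄ := FiniteDimensional.of_finrank_pos (by omega)
  haveI : FiniteDimensional K L := FiniteDimensional.of_finrank_pos (by omega)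
  haveI : Finite M₂ := Module.finite_of_finite K
  haveI : Finite M₄ := Module.finite_of_finite K
  haveI : Finite L := Module.finite_of_finite K
  obtain ⟨α₂, hα₂int, hα₂deg⟩ := exists_gen K M₂
  obtain ⟨α₄, hα₄int, hα₄deg⟩ := exists_gen K M₄
  rw [hM₂] at hα₂deg
  rw [hM₄] at hα₄deg
  -- a power basis for L
  obtain ⟨β, hβ⟩ := Field.exists_primitive_element_of_finite_top K L
  have hβint := IsIntegral.of_finite K β
  set pb : PowerBasis K L :=
    (IntermediateField.adjoin.powerBasis hβint).map
      ((IntermediateField.equivOfEq hβ).trans IntermediateField.topEquiv) with hpb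
  have hdim : pb.dim = 5 := by
    have h1 : pb.dim = (minpoly K β).natDegree := rfl
    rw [h1, ← IntermediateField.adjoin.finrank hβint, hβ, IntermediateField.finrank_top', hL]
  -- the evaluation map
  set p₂ := minpoly K α₂ with hp₂
  set p₄ := minpoly K α₄ with hp₄
  let E : K[X] →ₗ[K] (K × K × K × M₂ × M₄) :=
    (leval 0).prod ((leval 1).prod ((lcoeff K 8).prod
      ((aeval α₂).toLinearMap.prod (aeval α₄).toLinearMap)))
  set V := degreeLT K 9 with hV
  let E' : V →ₗ[K] (K × K × K × M₂ × M₄) := E.comp V.subtype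
  haveI : Module.Finite K V := Module.Finite.equiv (degreeLTEquiv K 9).symm
  -- injectivity of E'
  have hinj : Function.Injective E' := by
    rw [injective_iff_map_eq_zero]
    intro R h
    have h0 : eval 0 (R : K[X]) = 0 := congrArg Prod.fst h
    have h1 : eval 1 (R : K[X]) = 0 := congrArg (fun p => p.2.1) h
    have h8 : (R : K[X]).coeff 8 = 0 := congrArg (fun p => p.2.2.1) h
    have h2 : aeval α₂ (R : K[X]) = 0 := congrArg (fun p => p.2.2.2.1) h
    have h4 : aeval α₄ (R : K[X]) = 0 := congrArg (fun p => p.2.2.2.2) h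
    have dX : X ∣ (R : K[X]) := X_dvd_iff.mpr (by rw [coeff_zero_eq_eval_zero]; exact h0)
    have dX1 : (X - C 1) ∣ (R : K[X]) := dvd_iff_isRoot.mpr h1
    have d2 : p₂ ∣ (R : K[X]) := minpoly.dvd K α₂ h2
    have d4 : p₄ ∣ (R : K[X]) := minpoly.dvd K α₄ h4
    have h2irr := minpoly.irreducible hα₂int
    have h4irr := minpoly.irreducible hα₄int
    have h2ne : p₂ ≠ 0 := minpoly.ne_zero hα₂int
    have h4ne : p₄ ≠ 0 := minpoly.ne_zero hα₄int
    have cX_X1 : IsCoprime (X : K[X]) (X - C 1) := ⟨1, -1, by rw [C_1]; ring⟩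
    have c2X : IsCoprime p₂ (X : K[X]) := h2irr.coprime_iff_not_dvd.mpr (fun hdvd => by
      have := natDegree_le_of_dvd hdvd X_ne_zero
      rw [hα₂deg, natDegree_X] at this; omega)
    have c2X1 : IsCoprime p₂ ((X : K[X]) - C 1) := h2irr.coprime_iff_not_dvd.mpr (fun hdvd => by
      have := natDegree_le_of_dvd hdvd (X_sub_C_ne_zero 1)
      rw [hα₂deg, natDegree_X_sub_C] at this; omega)
    have c4X : IsCoprime p₄ (X : K[X]) := h4irr.coprime_iff_not_dvd.mpr (fun hdvd => by
      have := natDegree_le_of_dvd hdvd X_ne_zero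
      rw [hα₄deg, natDegree_X] at this; omega)
    have c4X1 : IsCoprime p₄ ((X : K[X]) - C 1) := h4irr.coprime_iff_not_dvd.mpr (fun hdvd => by
      have := natDegree_le_of_dvd hdvd (X_sub_C_ne_zero 1)
      rw [hα₄deg, natDegree_X_sub_C] at this; omega)
    have c42 : IsCoprime p₄ p₂ := h4irr.coprime_iff_not_dvd.mpr (fun hdvd => by
      have := natDegree_le_of_dvd hdvd h2ne
      rw [hα₂deg, hα₄deg] at this; omega)
    have cleft : IsCoprime ((X : K[X]) * (X - C 1)) (p₂ * p₄) :=
      ((c2X.symm.mul_left c2X1.symm).mul_right (c4X.symm.mul_left c4X1.symm))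
    have dvdall : (X : K[X]) * (X - C 1) * (p₂ * p₄) ∣ (R : K[X]) :=
      cleft.mul_dvd (cX_X1.mul_dvd dX dX1) (c42.symm.mul_dvd d2 d4)
    have hgne : (X : K[X]) * (X - C 1) * (p₂ * p₄) ≠ 0 :=
      mul_ne_zero (mul_ne_zero X_ne_zero (X_sub_C_ne_zero 1)) (mul_ne_zero h2ne h4ne)
    have hgdeg : ((X : K[X]) * (X - C 1) * (p₂ * p₄)).natDegree = 8 := by
      rw [natDegree_mul (mul_ne_zero X_ne_zero (X_sub_C_ne_zero 1)) (mul_ne_zero h2ne h4ne),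
        natDegree_mul X_ne_zero (X_sub_C_ne_zero 1), natDegree_mul h2ne h4ne,
        natDegree_X, natDegree_X_sub_C, hα₂deg, hα₄deg]
    rw [← Submodule.coe_eq_zero]
    by_contra hR0
    obtain ⟨s, hs⟩ := dvdall
    have hs0 : s ≠ 0 := by
      rintro rfl
      rw [mul_zero] at hs
      exact hR0 hs
    have hRdeg : (R : K[X]).natDegree = 8 + s.natDegree := by
      rw [hs, natDegree_mul hgne hs0, hgdeg]
    have hRlt : (R : K[X]).natDegree < 9 :=
      (natDegree_lt_iff_degree_lt hR0).mpr (mem_degreeLT.mp R.2)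
    have hR8 : (R : K[X]).natDegree = 8 := by omega
    have := leadingCoeff_ne_zero.mpr hR0
    rw [← coeff_natDegree, hR8, h8] at this
    exact this rfl
  -- surjectivity via dimension count
  have hfr : Module.finrank K V = Module.finrank K (K × K × K × M₂ × M₄) := by
    rw [(degreeLTEquiv K 9).finrank_eq, finrank_pi, Fintype.card_fin]
    simp [Module.finrank_prod, Module.finrank_self, hM₂, hM₄]
  have hsurj : Function.Surjective E' :=
    (LinearMap.injective_iff_surjective_of_finrank_eq_finrank hfr).mp hinj
  let e : V ≃ₗ[K] (K × K × K × M₂ × M₄) := LinearEquiv.ofBijective E' ⟨hinj, hsurj⟩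
  -- the maps
  let σ : L →ₗ[K] (K × K × K × M₂ × M₄) :=
    ((leval 0).prod ((leval 1).prod ((lcoeff K 4).prod
      ((aeval α₂).toLinearMap.prod (aeval α₄).toLinearMap)))).comp (liftMap pb)
  let π : (K × K × K × M₂ × M₄) →ₗ[K] L := (aeval pb.gen).toLinearMap.comp (V.subtype.comp e.symm.toLinearMap)
  refine ⟨σ, π, fun x y => ?_⟩
  have hPmem : liftMap pb x ∈ degreeLT K 5 := liftMap_mem pb hdim x
  have hQmem : liftMap pb y ∈ degreeLT K 5 := liftMap_mem pb hdim y
  have hPQmem : liftMap pb x * liftMap pb y ∈ degreeLT K 9 := mul_mem_degreeLT9 hPmem hQmem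
  have hEq : σ x * σ y = e ⟨liftMap pb x * liftMap pb y, hPQmem⟩ := by
    show σ x * σ y = E' ⟨liftMap pb x * liftMap pb y, hPQmem⟩
    refine Prod.ext ?_ (Prod.ext ?_ (Prod.ext ?_ (Prod.ext ?_ ?_))) <;>
      simp [σ, E', E, LinearMap.prod_apply, Pi.prod, Prod.fst_mul, Prod.snd_mul,
        eval_mul, coeff_mul_eight hPmem hQmem]
  rw [hEq]
  show aeval pb.gen ((V.subtype (e.symm (e ⟨liftMap pb x * liftMap pb y, hPQmem⟩))) : K[X]) = x * y
  rw [e.symm_apply_apply]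
  show aeval pb.gen (liftMap pb x * liftMap pb y) = x * y
  rw [map_mul, liftMap_aeval, liftMap_aeval]

end Key

/-- Section 7 of the paper: interpolating at 3 places of degree 1, 2 places of degree 2
and 1 place of degree 4 of the genus-2 curve `y² + y = x/(x³+x+1)` over `F_2`, bilinear
multiplication algorithms for `F_4` over `F_2` (modelled by `M₂`) with `r₂`
multiplications and for `F_16` over `F_2` (modelled by `M₄`) with `r₄` multiplications
yield one for `F_{2^5} = F_32` (modelled by `L`) with `3 + 2·r₂ + r₄` bilinear
multiplications; in particular `μ_2(5) ≤ 3·μ_2(1) + 2·μ_2(2) + μ_2(4)`. -/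
theorem bilinear_mul_F2_5
    (K : Type*) [Field K] [Fintype K] (hK : Fintype.card K = 2)
    (M₂ : Type*) [Field M₂] [Algebra K M₂] (hM₂ : Module.finrank K M₂ = 2)
    (M₄ : Type*) [Field M₄] [Algebra K M₄] (hM₄ : Module.finrank K M₄ = 4)
    (L : Type*) [Field L] [Algebra K L] (hL : Module.finrank K L = 5)
    (r₂ r₄ : ℕ) (hr₂ : HasBilinearMulAlg K M₂ r₂) (hr₄ : HasBilinearMulAlg K M₄ r₄) :
    HasBilinearMulAlg K L (3 + 2 * r₂ + r₄) := by
  obtain ⟨σ, π, hσπ⟩ := exists_transfer K M₂ hM₂ M₄ hM₄ L hL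
  have h2 : AuxAlg K M₂ (Fin r₂) := hr₂
  have h4 : AuxAlg K M₄ (Fin r₄) := hr₄
  have hB : AuxAlg K (K × K × K × M₂ × M₄)
      (Fin 1 ⊕ Fin 1 ⊕ Fin 1 ⊕ Fin r₂ ⊕ Fin r₄) :=
    AuxAlg.base.prod (AuxAlg.base.prod (AuxAlg.base.prod (h2.prod h4)))
  have hL' : AuxAlg K L ((Fin 1 ⊕ Fin 1 ⊕ Fin 1 ⊕ Fin r₂ ⊕ Fin r₄) ⊕ Fin r₂) :=
    (AuxAlg.transfer σ π hσπ hB).pad (Fin r₂)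
  have : AuxAlg K L (Fin (3 + 2 * r₂ + r₄)) :=
    hL'.reindex (Fintype.equivFinOfCardEq (by simp [Fintype.card_sum]; omega))
  exact this
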